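/- In the infinite square grid SQ (vertex set ℤ², adjacency given by ℓ₁-distance 1), every RED:OLD set has density at least 1/2; more precisely, for every RED:OLD set S and every n, |S ∩ [−n,n]²| / (2n+1)² ≥ 1/2 − o(1) as n → ∞. Consequently RED:OLD%(SQ) = 1/2. -/

import Mathlib

open scoped symmDiff

/-- `S` is a redundant OLD set of `G` (characterization): every vertex is
open-dominated at least twice and every pair of distinct vertices is
2-distinguished by `S`. -/
def SimpleGraph.IsREDOLDSet' {V : Type*} (G : SimpleGraph V) (S : Set V) : Prop :=
  (∀ v : V, 2 ≤ (G.neighborSet v ∩ S).encard) ∧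
  ∀ u v : V, u ≠ v →
    2 ≤ ((G.neighborSet u ∩ S) ∆ (G.neighborSet v ∩ S)).encard
/-- The infinite square grid: vertex set `ℤ × ℤ`, with adjacency given by
`ℓ₁`-distance 1. -/
def SQ : SimpleGraph (ℤ × ℤ) where
  Adj p q := |p.1 - q.1| + |p.2 - q.2| = 1
  symm := by
    constructor
    intro p q h
    simpa [abs_sub_comm] using h
  loopless := by
    constructor
    intro p h
    simp at h

/-- The density of `S` in the square grid: `lim inf` of the proportion of `S`
inside the box `[-n, n]²`. -/
noncomputable def gridDensity (S : Set (ℤ × ℤ)) : ℝ :=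
  Filter.liminf
    (fun n : ℕ =>
      ((S ∩ {p : ℤ × ℤ | |p.1| ≤ (n : ℤ) ∧ |p.2| ≤ (n : ℤ)}).ncard : ℝ) /
        ((2 * n + 1) ^ 2 : ℝ))
    Filter.atTop

open Filter

section Aux

lemma sq_adj_iff (p q : ℤ × ℤ) :
    SQ.Adj p q ↔ (q = (p.1 + 1, p.2) ∨ q = (p.1 - 1, p.2) ∨
      q = (p.1, p.2 + 1) ∨ q = (p.1, p.2 - 1)) := by
  show |p.1 - q.1| + |p.2 - q.2| = 1 ↔ _
  rcases abs_cases (p.1 - q.1) with ⟨h1, h2⟩ | ⟨h1, h2⟩ <;>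
    rcases abs_cases (p.2 - q.2) with ⟨h3, h4⟩ | ⟨h3, h4⟩ <;>
  · simp only [Prod.ext_iff]; omega

/-- box as a Finset -/
noncomputable def boxF (m : ℕ) : Finset (ℤ × ℤ) :=
  (Finset.Icc (-(m:ℤ)) m) ×ˢ (Finset.Icc (-(m:ℤ)) m)

lemma boxF_card (m : ℕ) : (boxF m).card = (2*m+1)^2 := by
  simp [boxF, Finset.card_product, Int.card_Icc]
  rw [show ((m:ℤ) + 1 + (m:ℤ)) = ((2*m+1 : ℕ) : ℤ) by push_cast; ring, Int.toNat_natCast]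
  ring

lemma mem_boxF (m : ℕ) (p : ℤ × ℤ) :
    p ∈ boxF m ↔ |p.1| ≤ (m:ℤ) ∧ |p.2| ≤ (m:ℤ) := by
  simp [boxF, Finset.mem_Icc, abs_le, and_comm, and_assoc, and_left_comm]

lemma count_lower (S : Set (ℤ × ℤ))
    (hS : ∀ v, 2 ≤ (SQ.neighborSet v ∩ S).encard) (n : ℕ) :
    2 * (2*n+1)^2 ≤ 4 * (S ∩ {p : ℤ × ℤ | |p.1| ≤ (n+1 : ℤ) ∧ |p.2| ≤ (n+1 : ℤ)}).ncard := by
  classical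
  set A : Finset (ℤ × ℤ) := (boxF (n+1)).filter (· ∈ S) with hA
  have hAcoe : (A : Set (ℤ × ℤ)) = S ∩ {p : ℤ × ℤ | |p.1| ≤ (n+1 : ℤ) ∧ |p.2| ≤ (n+1 : ℤ)} := by
    ext p
    simp only [hA, Finset.coe_filter, mem_boxF, Set.mem_setOf_eq, Set.mem_inter_iff]
    push_cast
    tauto
  have hAcard : (S ∩ {p : ℤ × ℤ | |p.1| ≤ (n+1 : ℤ) ∧ |p.2| ≤ (n+1 : ℤ)}).ncard = A.card := by
    rw [← hAcoe, Set.ncard_coe_finset]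
  have step1 : ∀ v ∈ boxF n, 2 ≤ (A.filter (fun p => SQ.Adj v p)).card := by
    intro v hv
    have hsub : SQ.neighborSet v ∩ S ⊆ (A.filter (fun p => SQ.Adj v p) : Finset (ℤ×ℤ)) := by
      intro p hp
      obtain ⟨hadj, hpS⟩ := hp
      rw [Finset.coe_filter]
      refine ⟨Finset.mem_filter.2 ⟨?_, hpS⟩, hadj⟩
      rw [mem_boxF] at hv ⊢
      rw [SimpleGraph.mem_neighborSet, sq_adj_iff] at hadj
      rcases hadj with h | h | h | h <;> subst h <;>
        simp only [abs_le] at hv ⊢ <;> push_cast <;> omega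
    have := (hS v).trans (Set.encard_mono hsub)
    rwa [Set.encard_coe_eq_coe_finsetCard, show (2:ℕ∞) = ((2:ℕ):ℕ∞) from rfl,
      Nat.cast_le] at this
  have step2 : 2 * (boxF n).card ≤ ∑ v ∈ boxF n, (A.filter (fun p => SQ.Adj v p)).card := by
    calc 2 * (boxF n).card = (boxF n).card • 2 := by rw [smul_eq_mul]; ring
    _ ≤ _ := Finset.card_nsmul_le_sum _ _ _ step1
  have step3 : ∑ v ∈ boxF n, (A.filter (fun p => SQ.Adj v p)).card
      = ∑ p ∈ A, ((boxF n).filter (fun v => SQ.Adj v p)).card := by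
    simp only [Finset.card_filter]
    exact Finset.sum_comm
  have step4 : ∀ p ∈ A, ((boxF n).filter (fun v => SQ.Adj v p)).card ≤ 4 := by
    intro p _
    have hsub : (boxF n).filter (fun v => SQ.Adj v p) ⊆
        {(p.1 + 1, p.2), (p.1 - 1, p.2), (p.1, p.2 + 1), (p.1, p.2 - 1)} := by
      intro v hv
      have hadj : SQ.Adj p v := (SQ.adj_symm (Finset.mem_filter.1 hv).2)
      rw [sq_adj_iff] at hadj
      simp only [Finset.mem_insert, Finset.mem_singleton]
      tauto
    calc ((boxF n).filter (fun v => SQ.Adj v p)).card ≤ _ := Finset.card_le_card hsub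
    _ ≤ 4 := by
      apply le_trans (Finset.card_insert_le _ _)
      apply Nat.succ_le_succ
      apply le_trans (Finset.card_insert_le _ _)
      apply Nat.succ_le_succ
      apply le_trans (Finset.card_insert_le _ _)
      apply Nat.succ_le_succ
      simp
  have step5 : ∑ p ∈ A, ((boxF n).filter (fun v => SQ.Adj v p)).card ≤ 4 * A.card := by
    calc _ ≤ ∑ _p ∈ A, 4 := Finset.sum_le_sum step4
    _ = 4 * A.card := by rw [Finset.sum_const, smul_eq_mul]; ring
  rw [hAcard]
  calc 2 * (2*n+1)^2 = 2 * (boxF n).card := by rw [boxF_card]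
  _ ≤ _ := step2
  _ = _ := step3
  _ ≤ 4 * A.card := step5

lemma part1 (S : Set (ℤ × ℤ)) (hS : ∀ v, 2 ≤ (SQ.neighborSet v ∩ S).encard)
    (ε : ℝ) (hε : 0 < ε) : ∃ N : ℕ, ∀ n ≥ N,
      1 / 2 - ε ≤
        ((S ∩ {p : ℤ × ℤ | |p.1| ≤ (n : ℤ) ∧ |p.2| ≤ (n : ℤ)}).ncard : ℝ) /
          ((2 * n + 1) ^ 2 : ℝ) := by
  refine ⟨max 1 ⌈1/ε⌉₊, fun n hn => ?_⟩
  have hn1 : 1 ≤ n := le_trans (le_max_left _ _) hn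
  obtain ⟨m, rfl⟩ : ∃ m : ℕ, n = m + 1 := ⟨n - 1, by omega⟩
  have hkey := count_lower S hS m
  set c := (S ∩ {p : ℤ × ℤ | |p.1| ≤ ((m:ℤ)+1) ∧ |p.2| ≤ ((m:ℤ)+1)}).ncard with hc
  have hcast : (2 : ℝ) * (2*m+1)^2 ≤ 4 * c := by exact_mod_cast hkey
  have hsame : ((S ∩ {p : ℤ × ℤ | |p.1| ≤ ((m+1 : ℕ) : ℤ) ∧ |p.2| ≤ ((m+1 : ℕ) : ℤ)}).ncard : ℝ)
      = (c : ℝ) := by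
    norm_cast
  rw [hsame]
  have hεn : 1 ≤ ε * ((m:ℝ)+1) := by
    have h1 : (⌈1/ε⌉₊ : ℝ) ≤ ((m:ℝ)+1) := by
      have : ⌈1/ε⌉₊ ≤ m + 1 := le_trans (le_max_right _ _) hn
      exact_mod_cast this
    have h2 : 1/ε ≤ ((m:ℝ)+1) := le_trans (Nat.le_ceil _) h1
    rw [div_le_iff₀ hε] at h2
    linarith [mul_comm ε ((m:ℝ)+1)]
  have hden : (0:ℝ) < ((2 * ((m:ℝ)+1) + 1) ^ 2) := by positivity
  have hcast2 : ((m+1:ℕ):ℝ) = (m:ℝ)+1 := by push_cast; ring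
  rw [hcast2, le_div_iff₀ hden]
  nlinarith [hcast, hεn, hε.le, sq_nonneg ((m:ℝ)+1)]

/-- the even-column set -/
def Sev : Set (ℤ × ℤ) := {p | p.1 % 2 = 0}

lemma nbr_even (v : ℤ × ℤ) (hv : v.1 % 2 = 0) :
    SQ.neighborSet v ∩ Sev = {(v.1, v.2 - 1), (v.1, v.2 + 1)} := by
  ext p
  simp only [Set.mem_inter_iff, SimpleGraph.mem_neighborSet, sq_adj_iff, Sev,
    Set.mem_setOf_eq, Set.mem_insert_iff, Set.mem_singleton_iff, Prod.ext_iff]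
  omega

lemma nbr_odd (v : ℤ × ℤ) (hv : v.1 % 2 ≠ 0) :
    SQ.neighborSet v ∩ Sev = {(v.1 - 1, v.2), (v.1 + 1, v.2)} := by
  ext p
  simp only [Set.mem_inter_iff, SimpleGraph.mem_neighborSet, sq_adj_iff, Sev,
    Set.mem_setOf_eq, Set.mem_insert_iff, Set.mem_singleton_iff, Prod.ext_iff]
  omega

lemma two_two {α : Type*} {A B : Set α} (hA : A.encard = 2) (hB : B.encard = 2)
    (hne : A ≠ B) : 2 ≤ (A ∆ B).encard := by
  have hAfin : A.Finite := Set.finite_of_encard_eq_coe (k := 2) hA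
  have hBfin : B.Finite := Set.finite_of_encard_eq_coe (k := 2) hB
  have h1 : (A \ B).Nonempty := by
    rw [Set.nonempty_iff_ne_empty]
    intro h
    have hsub : A ⊆ B := by rwa [Set.diff_eq_empty] at h
    exact hne (Set.Finite.eq_of_subset_of_encard_le hAfin hsub (by rw [hA, hB]))
  have h2 : (B \ A).Nonempty := by
    rw [Set.nonempty_iff_ne_empty]
    intro h
    have hsub : B ⊆ A := by rwa [Set.diff_eq_empty] at h
    exact hne ((Set.Finite.eq_of_subset_of_encard_le hBfin hsub (by rw [hA, hB])).symm)
  have : A ∆ B = (A \ B) ∪ (B \ A) := Set.symmDiff_def A B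
  rw [this, Set.encard_union_eq disjoint_sdiff_sdiff]
  have e1 : 1 ≤ (A \ B).encard := Set.one_le_encard_iff_nonempty.2 h1
  have e2 : 1 ≤ (B \ A).encard := Set.one_le_encard_iff_nonempty.2 h2
  calc (2:ℕ∞) = 1 + 1 := rfl
  _ ≤ _ := add_le_add e1 e2

lemma sev_redold : SQ.IsREDOLDSet' Sev := by
  constructor
  · intro v
    by_cases hv : v.1 % 2 = 0
    · rw [nbr_even v hv, Set.encard_pair (by simp [Prod.ext_iff]; omega)]
    · rw [nbr_odd v hv, Set.encard_pair (by simp [Prod.ext_iff]; omega)]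
  · intro u v huv
    have card_u : ∀ w : ℤ × ℤ, (SQ.neighborSet w ∩ Sev).encard = 2 := by
      intro w
      by_cases hw : w.1 % 2 = 0
      · rw [nbr_even w hw, Set.encard_pair (by simp [Prod.ext_iff]; omega)]
      · rw [nbr_odd w hw, Set.encard_pair (by simp [Prod.ext_iff]; omega)]
    apply two_two (card_u u) (card_u v)
    intro hEq
    apply huv
    by_cases hu : u.1 % 2 = 0 <;> by_cases hv : v.1 % 2 = 0
    · rw [nbr_even u hu, nbr_even v hv] at hEq
      have h1 : (u.1, u.2 - 1) ∈ ({(v.1, v.2 - 1), (v.1, v.2 + 1)} : Set (ℤ×ℤ)) := by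
        rw [← hEq]; left; rfl
      have h2 : (u.1, u.2 + 1) ∈ ({(v.1, v.2 - 1), (v.1, v.2 + 1)} : Set (ℤ×ℤ)) := by
        rw [← hEq]; right; rfl
      simp only [Set.mem_insert_iff, Set.mem_singleton_iff, Prod.ext_iff] at h1 h2
      have : u.1 = v.1 ∧ u.2 = v.2 := by omega
      exact Prod.ext this.1 this.2
    · rw [nbr_even u hu, nbr_odd v hv] at hEq
      have h1 : (u.1, u.2 - 1) ∈ ({(v.1 - 1, v.2), (v.1 + 1, v.2)} : Set (ℤ×ℤ)) := by
        rw [← hEq]; left; rfl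
      have h2 : (u.1, u.2 + 1) ∈ ({(v.1 - 1, v.2), (v.1 + 1, v.2)} : Set (ℤ×ℤ)) := by
        rw [← hEq]; right; rfl
      simp only [Set.mem_insert_iff, Set.mem_singleton_iff, Prod.ext_iff] at h1 h2
      exfalso; omega
    · rw [nbr_odd u hu, nbr_even v hv] at hEq
      have h1 : (u.1 - 1, u.2) ∈ ({(v.1, v.2 - 1), (v.1, v.2 + 1)} : Set (ℤ×ℤ)) := by
        rw [← hEq]; left; rfl
      have h2 : (u.1 + 1, u.2) ∈ ({(v.1, v.2 - 1), (v.1, v.2 + 1)} : Set (ℤ×ℤ)) := by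
        rw [← hEq]; right; rfl
      simp only [Set.mem_insert_iff, Set.mem_singleton_iff, Prod.ext_iff] at h1 h2
      exfalso; omega
    · rw [nbr_odd u hu, nbr_odd v hv] at hEq
      have h1 : (u.1 - 1, u.2) ∈ ({(v.1 - 1, v.2), (v.1 + 1, v.2)} : Set (ℤ×ℤ)) := by
        rw [← hEq]; left; rfl
      have h2 : (u.1 + 1, u.2) ∈ ({(v.1 - 1, v.2), (v.1 + 1, v.2)} : Set (ℤ×ℤ)) := by
        rw [← hEq]; right; rfl
      simp only [Set.mem_insert_iff, Set.mem_singleton_iff, Prod.ext_iff] at h1 h2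
      have : u.1 = v.1 ∧ u.2 = v.2 := by omega
      exact Prod.ext this.1 this.2

lemma sev_count (n : ℕ) :
    (Sev ∩ {p : ℤ × ℤ | |p.1| ≤ (n : ℤ) ∧ |p.2| ≤ (n : ℤ)}).ncard ≤ (n+1)*(2*n+1) := by
  classical
  set E : Finset ℤ := (Finset.Icc (-(n:ℤ)) n).filter (fun x => x % 2 = 0) with hE
  have hsub : Sev ∩ {p : ℤ × ℤ | |p.1| ≤ (n : ℤ) ∧ |p.2| ≤ (n : ℤ)}
      ⊆ ↑(E ×ˢ Finset.Icc (-(n:ℤ)) n) := by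
    intro p hp
    obtain ⟨hs, hb1, hb2⟩ := hp
    simp only [Finset.coe_product, Set.mem_prod, Finset.mem_coe, hE, Finset.mem_filter,
      Finset.mem_Icc]
    rw [abs_le] at hb1 hb2
    exact ⟨⟨⟨hb1.1, hb1.2⟩, hs⟩, hb2.1, hb2.2⟩
  have h1 := Set.ncard_le_ncard hsub (Finset.finite_toSet _)
  rw [Set.ncard_coe_finset, Finset.card_product] at h1
  have hEcard : E.card ≤ n + 1 := by
    have hinj : ∀ x ∈ E, ∀ y ∈ E, x / 2 = y / 2 → x = y := by
      intro x hx y hy h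
      simp only [hE, Finset.mem_filter, Finset.mem_Icc] at hx hy
      omega
    have hmaps : ∀ x ∈ E, x / 2 ∈ Finset.Icc (-((n:ℤ)/2)) ((n:ℤ)/2) := by
      intro x hx
      simp only [hE, Finset.mem_filter, Finset.mem_Icc] at hx
      rw [Finset.mem_Icc]
      omega
    have := Finset.card_le_card_of_injOn (fun x => x / 2) hmaps (fun x hx y hy => hinj x hx y hy)
    rw [Int.card_Icc] at this
    omega
  have hIcard : (Finset.Icc (-(n:ℤ)) n).card = 2*n+1 := by
    rw [Int.card_Icc]; omega
  calc _ ≤ E.card * (Finset.Icc (-(n:ℤ)) n).card := h1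
  _ ≤ (n+1) * (2*n+1) := by rw [hIcard]; exact Nat.mul_le_mul_right _ hEcard

lemma count_upper (S : Set (ℤ × ℤ)) (n : ℕ) :
    (S ∩ {p : ℤ × ℤ | |p.1| ≤ (n : ℤ) ∧ |p.2| ≤ (n : ℤ)}).ncard ≤ (2*n+1)^2 := by
  have hsub : S ∩ {p : ℤ × ℤ | |p.1| ≤ (n : ℤ) ∧ |p.2| ≤ (n : ℤ)} ⊆ ↑(boxF n) := by
    intro p hp
    rw [Finset.mem_coe, mem_boxF]
    exact hp.2
  have h1 := Set.ncard_le_ncard hsub (Finset.finite_toSet _)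
  rw [Set.ncard_coe_finset, boxF_card] at h1
  exact h1

lemma g_tendsto : Tendsto (fun n : ℕ => ((n:ℝ)+1)/(2*n+1)) atTop (nhds (1/2)) := by
  have h0 : Tendsto (fun n : ℕ => 1/(n:ℝ)) atTop (nhds 0) := tendsto_one_div_atTop_nhds_zero_nat
  have h1 : Tendsto (fun n : ℕ => (1 + 1/(n:ℝ))/(2 + 1/(n:ℝ))) atTop (nhds ((1+0)/(2+0))) :=
    Tendsto.div (tendsto_const_nhds.add h0) (tendsto_const_nhds.add h0) (by norm_num)
  rw [show ((1:ℝ)+0)/(2+0) = 1/2 by norm_num] at h1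
  apply h1.congr'
  filter_upwards [eventually_ge_atTop 1] with n hn
  have hn0 : (n:ℝ) ≠ 0 := Nat.cast_ne_zero.2 (by omega)
  field_simp

/-- the density-ratio function -/
noncomputable def fS (S : Set (ℤ × ℤ)) (n : ℕ) : ℝ :=
  ((S ∩ {p : ℤ × ℤ | |p.1| ≤ (n : ℤ) ∧ |p.2| ≤ (n : ℤ)}).ncard : ℝ) / ((2 * n + 1) ^ 2 : ℝ)

lemma fS_nonneg (S : Set (ℤ × ℤ)) (n : ℕ) : 0 ≤ fS S n := by
  unfold fS; positivity

lemma fS_le_one (S : Set (ℤ × ℤ)) (n : ℕ) : fS S n ≤ 1 := by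
  unfold fS
  rw [div_le_one (by positivity)]
  have := count_upper S n
  calc ((S ∩ {p : ℤ × ℤ | |p.1| ≤ (n : ℤ) ∧ |p.2| ≤ (n : ℤ)}).ncard : ℝ)
      ≤ (((2*n+1)^2 : ℕ) : ℝ) := by exact_mod_cast this
  _ = ((2 * n + 1) ^ 2 : ℝ) := by push_cast; ring

lemma half_le_gridDensity (S : Set (ℤ × ℤ))
    (hS : ∀ v, 2 ≤ (SQ.neighborSet v ∩ S).encard) : 1/2 ≤ gridDensity S := by
  have hgd : gridDensity S = liminf (fS S) atTop := rfl
  rw [hgd]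
  apply le_of_forall_sub_le
  intro ε hε
  obtain ⟨N, hN⟩ := part1 S hS ε hε
  refine Filter.le_liminf_of_le ?_ ?_
  · exact isCoboundedUnder_ge_of_le atTop (fS_le_one S)
  · filter_upwards [eventually_ge_atTop N] with n hn
    exact hN n hn

lemma gridDensity_sev : gridDensity Sev = 1/2 := by
  have hgd : gridDensity Sev = liminf (fS Sev) atTop := rfl
  refine le_antisymm ?_ (half_le_gridDensity Sev sev_redold.1)
  rw [hgd]
  have hle : liminf (fS Sev) atTop ≤ liminf (fun n : ℕ => ((n:ℝ)+1)/(2*n+1)) atTop := by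
    apply Filter.liminf_le_liminf
    · filter_upwards with n
      unfold fS
      rw [div_le_div_iff₀ (by positivity) (by positivity)]
      have hc := sev_count n
      have hc' : ((Sev ∩ {p : ℤ × ℤ | |p.1| ≤ (n : ℤ) ∧ |p.2| ≤ (n : ℤ)}).ncard : ℝ)
          ≤ (((n+1)*(2*n+1) : ℕ) : ℝ) := by exact_mod_cast hc
      push_cast at hc'
      nlinarith [hc']
    · exact ⟨0, Filter.eventually_map.2 (Eventually.of_forall (fS_nonneg Sev))⟩
    · apply isCoboundedUnder_ge_of_le atTop (x := 1)
      intro n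
      rw [div_le_one (by positivity)]
      linarith [Nat.cast_nonneg (α := ℝ) n]
  rw [g_tendsto.liminf_eq] at hle
  exact hle

end Aux

/-- Every RED:OLD set of the infinite square grid has density at least `1/2`
(its box-proportions are eventually at least `1/2 - ε` for every `ε > 0`), and
consequently `RED:OLD%(SQ) = 1/2`: `1/2` is the least achievable density. -/
theorem sq_redold_density :
    (∀ S : Set (ℤ × ℤ), SQ.IsREDOLDSet' S → ∀ ε : ℝ, 0 < ε → ∃ N : ℕ, ∀ n ≥ N,
      1 / 2 - ε ≤
        ((S ∩ {p : ℤ × ℤ | |p.1| ≤ (n : ℤ) ∧ |p.2| ≤ (n : ℤ)}).ncard : ℝ) /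
          ((2 * n + 1) ^ 2 : ℝ)) ∧
    IsLeast {d : ℝ | ∃ S : Set (ℤ × ℤ), SQ.IsREDOLDSet' S ∧ gridDensity S = d}
      (1 / 2) := by
  constructor
  · intro S hS ε hε
    exact part1 S hS.1 ε hε
  · constructor
    · exact ⟨Sev, sev_redold, gridDensity_sev⟩
    · rintro d ⟨S, hS, rfl⟩
      exact half_le_gridDensity S hS.1
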